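/- The language Q of all primitive words over the alphabet {a,b} is not regular. -/

import Mathlib

/-- The two-letter alphabet {a, b}. -/
inductive AB : Type
  | a : AB
  | b : AB

/-- The `m`-th power of a word `u`. -/
def wpow {α : Type*} (u : List α) (m : ℕ) : List α := (List.replicate m u).flatten

/-- A word is primitive if `w = u^m` implies `m = 1`. -/
def Primitive {α : Type*} (w : List α) : Prop :=
  ∀ (u : List α) (m : ℕ), w = wpow u m → m = 1

deriving instance DecidableEq for AB

/-- The word a^i b a^j b. -/
def wd (i j : ℕ) : List AB :=
  List.replicate i AB.a ++ AB.b :: (List.replicate j AB.a ++ [AB.b])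

lemma count_wpow (u : List AB) (m : ℕ) :
    (wpow u m).count AB.b = m * u.count AB.b := by
  simp [wpow, List.count_flatten, List.map_replicate, List.sum_replicate, smul_eq_mul]

lemma count_b_wd (i j : ℕ) : (wd i j).count AB.b = 2 := by
  simp [wd, List.count_append, List.count_replicate, List.count_cons]

lemma wd_ne_nil (i j : ℕ) : wd i j ≠ [] := by
  simp [wd]

lemma all_a (v : List AB) (h : v.count AB.b = 0) :
    v = List.replicate v.length AB.a := by
  apply List.eq_replicate_length.mpr
  intro c hc
  cases c with
  | a => rfl
  | b => exact absurd hc (List.count_eq_zero.mp h)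

lemma rep_cancel : ∀ (i s : ℕ) (t t' : List AB),
    List.replicate i AB.a ++ AB.b :: t = List.replicate s AB.a ++ AB.b :: t' →
    i = s ∧ t = t' := by
  intro i
  induction i with
  | zero =>
    intro s t t' h
    cases s with
    | zero => simpa using h
    | succ s => simp [List.replicate_succ] at h
  | succ i ih =>
    intro s t t' h
    cases s with
    | zero => simp [List.replicate_succ] at h
    | succ s =>
      simp only [List.replicate_succ, List.cons_append, List.cons.injEq] at h
      obtain ⟨-, h2⟩ := h
      obtain ⟨h1, h2⟩ := ih s t t' h2
      exact ⟨by omega, h2⟩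

lemma wpow_two (u : List AB) : wpow u 2 = u ++ u := by
  simp [wpow]

lemma wd_prim {i j : ℕ} (hij : i ≠ j) : Primitive (wd i j) := by
  intro u m h
  have hcnt : 2 = m * u.count AB.b := by
    rw [← count_b_wd i j, h, count_wpow]
  by_contra hm1
  have hm0 : m ≠ 0 := by
    rintro rfl
    simp [wpow] at h
    exact wd_ne_nil i j h
  have hm2 : m = 2 := by
    have hd : m ∣ 2 := ⟨_, hcnt⟩
    have := Nat.le_of_dvd (by norm_num) hd
    interval_cases m <;> omega
  subst hm2
  have hc1 : u.count AB.b = 1 := by omega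
  have h2 : wd i j = u ++ u := by rw [h, wpow_two]
  rcases u.eq_nil_or_concat with rfl | ⟨v, c, rfl⟩
  · simp at hc1
  simp only [List.concat_eq_append] at h2 hc1
  -- identify last letter
  have hform : wd i j = (List.replicate i AB.a ++ AB.b :: List.replicate j AB.a) ++ [AB.b] := by
    simp [wd]
  have h3 : ((v ++ [c]) ++ v) ++ [c] = (List.replicate i AB.a ++ AB.b :: List.replicate j AB.a) ++ [AB.b] := by
    rw [← hform, h2]; simp
  obtain ⟨-, hc⟩ := List.append_inj' h3 rfl
  have hcb : c = AB.b := by simpa using hc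
  subst hcb
  have hv0 : v.count AB.b = 0 := by
    simp [List.count_append] at hc1; omega
  have hv := all_a v hv0
  have h4 : List.replicate i AB.a ++ AB.b :: (List.replicate j AB.a ++ [AB.b]) =
      List.replicate v.length AB.a ++ AB.b :: (v ++ [AB.b]) := by
    rw [← wd]
    rw [h2]
    conv_lhs => rw [hv]
    simp
    exact hv.symm
  obtain ⟨hi, ht⟩ := rep_cancel i v.length _ _ h4
  obtain ⟨hj, -⟩ := List.append_inj' ht rfl
  apply hij
  have hvj : v.length = j := by rw [← hj]; simp
  omega

lemma wpow_replicate (s n : ℕ) :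
    wpow (List.replicate s AB.a) n = List.replicate (n * s) AB.a := by
  induction n with
  | zero => simp [wpow]
  | succ n ih =>
    have step : wpow (List.replicate s AB.a) (n + 1) =
        List.replicate s AB.a ++ wpow (List.replicate s AB.a) n := by
      simp [wpow, List.replicate_succ]
    rw [step, ih, ← List.replicate_add]
    congr 1
    ring

/-- The language of all primitive words over {a,b} is not regular. -/
theorem stmt_1 : ¬ Language.IsRegular ({w | Primitive w} : Language AB) := by
  rintro ⟨σ, fσ, M, hM⟩
  set p := Fintype.card σ with hp
  set N := p + Nat.factorial p with hN
  have hfac : 1 ≤ Nat.factorial p := Nat.one_le_iff_ne_zero.mpr (Nat.factorial_ne_zero p)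
  have hw : wd p N ∈ M.accepts := by
    rw [hM]; exact wd_prim (by omega)
  have hlen : p ≤ (wd p N).length := by
    simp [wd]
  obtain ⟨x, y, z, hxyz, hxy, hyne, hsub⟩ := M.pumping_lemma hw hlen
  rw [← hp] at hxy
  -- x ++ y is a prefix of a^p
  have hpre1 : x ++ y <+: List.replicate p AB.a := by
    apply List.prefix_of_prefix_length_le (l₃ := wd p N)
    · exact ⟨z, hxyz.symm⟩
    · exact ⟨AB.b :: (List.replicate N AB.a ++ [AB.b]), rfl⟩
    · simpa using hxy
  have hall : ∀ c ∈ x ++ y, c = AB.a := fun c hc =>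
    List.eq_of_mem_replicate (hpre1.subset hc)
  have hx : x = List.replicate x.length AB.a :=
    List.eq_replicate_length.mpr fun c hc => hall c (List.mem_append_left _ hc)
  have hy : y = List.replicate y.length AB.a :=
    List.eq_replicate_length.mpr fun c hc => hall c (List.mem_append_right _ hc)
  have hly : 1 ≤ y.length := List.length_pos_iff.mpr hyne
  set lx := x.length
  set ly := y.length
  have hk : lx + ly ≤ p := by simpa using hxy
  -- determine z
  have hz : z = List.replicate (p - (lx + ly)) AB.a ++ AB.b :: (List.replicate N AB.a ++ [AB.b]) := by
    apply List.append_cancel_left (as := List.replicate (lx + ly) AB.a)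
    have e1 : List.replicate (lx + ly) AB.a ++ z = wd p N := by
      rw [hxyz]
      conv_rhs => rw [hx, hy]
      rw [List.replicate_add, List.append_assoc]
    rw [e1]
    have e2 : p = (lx + ly) + (p - (lx + ly)) := by omega
    show wd p N = _
    rw [wd]
    conv_lhs => rw [e2]
    rw [List.replicate_add, List.append_assoc]
  -- the pump count
  set n := Nat.factorial p / ly + 1 with hn
  have hdvd : ly ∣ Nat.factorial p := Nat.dvd_factorial hly (by omega)
  have hmul : n * ly = Nat.factorial p + ly := by
    rw [hn, Nat.add_mul, one_mul, Nat.div_mul_cancel hdvd]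
  -- the pumped word
  have harith : lx + (n * ly + (p - (lx + ly))) = N := by omega
  have hpump : x ++ (wpow y n ++ z) = wd N N := by
    conv_lhs => rw [hx, hy, hz]
    rw [wpow_replicate]
    have hrep : List.replicate N AB.a =
        List.replicate lx AB.a ++ (List.replicate (n * ly) AB.a ++
          List.replicate (p - (lx + ly)) AB.a) := by
      rw [← List.replicate_add, ← List.replicate_add, harith]
    rw [wd, hrep]
    simp only [List.append_assoc]
  -- membership of the pumped word in the accepted language
  have hzmem : z ∈ ({z} : Language AB) := rfl
  have hxmem : x ∈ ({x} : Language AB) := rfl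
  have hmem : x ++ (wpow y n ++ z) ∈ ({x} * KStar.kstar {y} * {z} : Language AB) := by
    apply Language.mem_mul.mpr
    refine ⟨x ++ wpow y n, ?_, z, hzmem, by simp⟩
    apply Language.mem_mul.mpr
    refine ⟨x, hxmem, wpow y n, ?_, rfl⟩
    apply Language.mem_kstar.mpr
    exact ⟨List.replicate n y, by simp [wpow], fun w hw => by rw [List.eq_of_mem_replicate hw]; rfl⟩
  have hacc := hsub hmem
  rw [hM] at hacc
  have hprim : Primitive (wd N N) := by rwa [hpump] at hacc
  have : (2 : ℕ) = 1 := by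
    apply hprim (List.replicate N AB.a ++ [AB.b])
    rw [wpow_two, wd]
    simp only [List.append_assoc, List.singleton_append]
  omega
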